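/- Let f : [0,∞) → [0,∞) be continuous, differentiable where positive, and satisfy the differential inequality f'(t) ≤ -2γ f(t)^((1+ε)/2) whenever f(t) > 0, with γ > 0 and 0 < ε < 1. Then for all t ≥ 0, f(t) ≤ (max(f(0)^((1-ε)/2) - γ(1-ε)t, 0))^(2/(1-ε)). In particular f(t) = 0 for all t ≥ f(0)^((1-ε)/2)/(γ(1-ε)). -/

import Mathlib

/-- On an interval where `g` is positive in the interior and has derivative `≤ -c`,
`g` decreases at rate at least `c`. -/
lemma comparison_ode_step (c : ℝ) (g : ℝ → ℝ)
    (hgc : ContinuousOn g (Set.Ici 0))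
    (hder : ∀ t, 0 ≤ t → 0 < g t → ∃ d, HasDerivAt g d t ∧ d ≤ -c)
    {a b : ℝ} (ha : 0 ≤ a) (hab : a ≤ b)
    (hpos : ∀ s, a < s → s < b → 0 < g s) :
    g b ≤ g a - c * (b - a) := by
  have hD : ∀ x ∈ interior (Set.Icc a b), HasDerivAt (fun t => g t + c * t) (deriv (fun t => g t + c * t) x) x ∧ deriv (fun t => g t + c * t) x ≤ 0 := by
    intro x hx
    rw [interior_Icc] at hx
    obtain ⟨d, hd, hdc⟩ := hder x (le_trans ha hx.1.le) (hpos x hx.1 hx.2)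
    have hc : HasDerivAt (fun t : ℝ => c * t) c x := by
      simpa using (hasDerivAt_id x).const_mul c
    have h : HasDerivAt (fun t => g t + c * t) (d + c) x := hd.add hc
    exact ⟨by rw [h.deriv]; exact h, by rw [h.deriv]; linarith⟩
  have key : AntitoneOn (fun t => g t + c * t) (Set.Icc a b) := by
    apply antitoneOn_of_deriv_nonpos (convex_Icc a b)
    · exact (hgc.mono (Set.Icc_subset_Ici_self.trans (Set.Ici_subset_Ici.2 ha))).add
        (continuous_const.mul continuous_id).continuousOn
    · exact fun x hx => ((hD x hx).1).differentiableAt.differentiableWithinAt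
    · exact fun x hx => (hD x hx).2
  have := key (Set.left_mem_Icc.2 hab) (Set.right_mem_Icc.2 hab) hab
  simp only at this
  linarith

lemma comparison_ode_decay (c : ℝ) (hc : 0 < c) (g : ℝ → ℝ)
    (hg0 : ∀ t, 0 ≤ t → 0 ≤ g t)
    (hgc : ContinuousOn g (Set.Ici 0))
    (hder : ∀ t, 0 ≤ t → 0 < g t → ∃ d, HasDerivAt g d t ∧ d ≤ -c) :
    ∀ T, 0 ≤ T → g T ≤ max (g 0 - c * T) 0 := by
  intro T hT
  by_cases hall : ∀ s ∈ Set.Icc (0:ℝ) T, 0 < g s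
  · have h := comparison_ode_step c g hgc hder le_rfl hT
      (fun s hs1 hs2 => hall s ⟨hs1.le, hs2.le⟩)
    have : g T ≤ g 0 - c * T := by linarith
    exact this.trans (le_max_left _ _)
  · push_neg at hall
    obtain ⟨s₀, hs₀, hgs₀⟩ := hall
    suffices h : g T = 0 by rw [h]; exact le_max_right _ _
    by_contra hgT
    have hgTpos : 0 < g T := lt_of_le_of_ne (hg0 T hT) (Ne.symm hgT)
    set Z : Set ℝ := Set.Icc 0 T ∩ g ⁻¹' {0} with hZ
    have hZclosed : IsClosed Z :=
      (hgc.mono (Set.Icc_subset_Ici_self)).preimage_isClosed_of_isClosed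
        isClosed_Icc isClosed_singleton
    have hZne : Z.Nonempty := ⟨s₀, hs₀, le_antisymm hgs₀ (hg0 s₀ hs₀.1)⟩
    have hZbdd : BddAbove Z := ⟨T, fun x hx => hx.1.2⟩
    have hu : sSup Z ∈ Z := hZclosed.csSup_mem hZne hZbdd
    set u := sSup Z
    have hu0 : 0 ≤ u := hu.1.1
    have huT : u ≤ T := hu.1.2
    have hgu : g u = 0 := hu.2
    have huT' : u < T := lt_of_le_of_ne huT (fun h => hgT (h ▸ hgu))
    have hpos : ∀ s, u < s → s < T → 0 < g s := by
      intro s hs1 hs2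
      rcases lt_or_eq_of_le (hg0 s (hu0.trans hs1.le)) with h | h
      · exact h
      · exact absurd (le_csSup hZbdd ⟨⟨hu0.trans hs1.le, hs2.le⟩, h.symm⟩) (not_le.2 hs1)
    have h := comparison_ode_step c g hgc hder hu0 huT hpos
    rw [hgu] at h
    nlinarith

theorem comparison_ode (γ ε : ℝ) (hγ : 0 < γ) (hε0 : 0 < ε) (hε1 : ε < 1)
    (f f' : ℝ → ℝ) (hf_nonneg : ∀ t, 0 ≤ t → 0 ≤ f t)
    (hf_cont : ContinuousOn f (Set.Ici 0))
    (hf_deriv : ∀ t, 0 ≤ t → 0 < f t → HasDerivAt f (f' t) t)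
    (hf_ineq : ∀ t, 0 ≤ t → 0 < f t → f' t ≤ -2 * γ * f t ^ ((1 + ε) / 2)) :
    (∀ t, 0 ≤ t →
        f t ≤ (max (f 0 ^ ((1 - ε) / 2) - γ * (1 - ε) * t) 0) ^ (2 / (1 - ε))) ∧
      ∀ t, f 0 ^ ((1 - ε) / 2) / (γ * (1 - ε)) ≤ t → f t = 0 := by
  have h1ε : 0 < 1 - ε := by linarith
  set c : ℝ := γ * (1 - ε) with hc
  have hcpos : 0 < c := mul_pos hγ h1ε
  set p : ℝ := (1 - ε) / 2 with hp
  have hppos : 0 < p := by positivity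
  set g : ℝ → ℝ := fun t => f t ^ p with hg
  have hg0 : ∀ t, 0 ≤ t → 0 ≤ g t := fun t ht => Real.rpow_nonneg (hf_nonneg t ht) p
  have hgc : ContinuousOn g (Set.Ici 0) :=
    hf_cont.rpow_const (fun t ht => Or.inr hppos.le)
  have hder : ∀ t, 0 ≤ t → 0 < g t → ∃ d, HasDerivAt g d t ∧ d ≤ -c := by
    intro t ht hgt
    have hft : 0 < f t := by
      rcases lt_or_eq_of_le (hf_nonneg t ht) with h | h
      · exact h
      · exfalso; rw [hg] at hgt; simp only at hgt
        rw [← h, Real.zero_rpow hppos.ne'] at hgt; exact lt_irrefl 0 hgt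
    have hd := (hf_deriv t ht hft).rpow_const (p := p) (Or.inl hft.ne')
    refine ⟨f' t * p * f t ^ (p - 1), hd, ?_⟩
    have hineq := hf_ineq t ht hft
    have hmul : 0 ≤ p * f t ^ (p - 1) :=
      mul_nonneg hppos.le (Real.rpow_nonneg hft.le _)
    have h2 : f' t * (p * f t ^ (p - 1)) ≤
        (-2 * γ * f t ^ ((1 + ε) / 2)) * (p * f t ^ (p - 1)) :=
      mul_le_mul_of_nonneg_right hineq hmul
    have hpow : f t ^ ((1 + ε) / 2) * f t ^ (p - 1) = 1 := by
      rw [← Real.rpow_add hft]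
      have : (1 + ε) / 2 + (p - 1) = 0 := by rw [hp]; ring
      rw [this, Real.rpow_zero]
    have h3 : (-2 * γ * f t ^ ((1 + ε) / 2)) * (p * f t ^ (p - 1)) = -c := by
      rw [hc, hp]
      have : -2 * γ * f t ^ ((1 + ε) / 2) * ((1 - ε) / 2 * f t ^ ((1 - ε) / 2 - 1))
          = -(γ * (1 - ε)) * (f t ^ ((1 + ε) / 2) * f t ^ ((1 - ε) / 2 - 1)) := by ring
      rw [this, hpow]; ring
    calc f' t * p * f t ^ (p - 1) = f' t * (p * f t ^ (p - 1)) := by ring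
      _ ≤ _ := h2
      _ = -c := h3
  have hdecay := comparison_ode_decay c hcpos g hg0 hgc hder
  have hexp : p * (2 / (1 - ε)) = 1 := by rw [hp]; field_simp
  have hfg : ∀ t, 0 ≤ t → f t = g t ^ (2 / (1 - ε)) := by
    intro t ht
    rw [hg]; simp only
    rw [← Real.rpow_mul (hf_nonneg t ht), hexp, Real.rpow_one]
  have main : ∀ t, 0 ≤ t →
      f t ≤ (max (f 0 ^ ((1 - ε) / 2) - γ * (1 - ε) * t) 0) ^ (2 / (1 - ε)) := by
    intro t ht
    rw [hfg t ht]
    exact Real.rpow_le_rpow (hg0 t ht) (hdecay t ht) (by positivity)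
  refine ⟨main, fun t ht => ?_⟩
  have hg00 : 0 ≤ f 0 ^ ((1 - ε) / 2) := Real.rpow_nonneg (hf_nonneg 0 le_rfl) _
  have ht0 : 0 ≤ t := le_trans (by positivity) ht
  have hle : f 0 ^ ((1 - ε) / 2) - γ * (1 - ε) * t ≤ 0 := by
    rw [div_le_iff₀ hcpos] at ht
    nlinarith
  have := main t ht0
  rw [max_eq_right hle, Real.zero_rpow (by positivity : (0:ℝ) < 2 / (1 - ε)).ne'] at this
  exact le_antisymm this (hf_nonneg t ht0)
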